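/- Let ν, ν' ∈ ℝ⁴ ∖ {0} with q(ν) = q(ν') = 0, and suppose ν' is not a positive scalar multiple of −ν. Then there exist h₁, h₂ ∈ SL(2,ℝ) such that, writing u := (h₁,h₂)·ν and u' := (h₁,h₂)·ν', one has u₂ + u₄ > 0 and u'₂ + u'₄ > 0. -/

import Mathlib

noncomputable section

/-- The bilinear form `q(x,y) = -x₁y₁ - x₂y₂ + x₃y₃ + x₄y₄` on `ℝ⁴`. -/
def qf (x y : Fin 4 → ℝ) : ℝ := -(x 0 * y 0) - x 1 * y 1 + x 2 * y 2 + x 3 * y 3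

abbrev SL2 := Matrix.SpecialLinearGroup (Fin 2) ℝ

/-- The linear isomorphism `ψ : ℝ⁴ → M₂(ℝ)`. -/
def psiM (x : Fin 4 → ℝ) : Matrix (Fin 2) (Fin 2) ℝ :=
  !![x 0 + x 2, x 1 + x 3; x 3 - x 1, x 0 - x 2]

/-- The inverse of `ψ`. -/
def psiInv (A : Matrix (Fin 2) (Fin 2) ℝ) : Fin 4 → ℝ :=
  ![(A 0 0 + A 1 1) / 2, (A 0 1 - A 1 0) / 2, (A 0 0 - A 1 1) / 2, (A 0 1 + A 1 0) / 2]

/-- The action of `SL(2,ℝ) × SL(2,ℝ)` on `ℝ⁴`: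
`(h₁,h₂)·x = ψ⁻¹(h₁ ψ(x) h₂⁻¹)`. -/
def act (h₁ h₂ : SL2) (x : Fin 4 → ℝ) : Fin 4 → ℝ :=
  psiInv ((h₁ : Matrix (Fin 2) (Fin 2) ℝ) * psiM x * ((h₂⁻¹ : SL2) : Matrix (Fin 2) (Fin 2) ℝ))

/- ### Auxiliary lemmas -/

lemma aux_quad (a b c : ℝ) (ha : 0 < a) : ∃ s : ℝ, 0 < a*s^2 + b*s + c := by
  refine ⟨max 1 ((1+|b|+|c|)/a), ?_⟩
  set s := max 1 ((1+|b|+|c|)/a) with hs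
  have hs1 : (1:ℝ) ≤ s := le_max_left _ _
  have hs2 : (1+|b|+|c|)/a ≤ s := le_max_right _ _
  have key : 1+|b|+|c| ≤ a*s := by rw [div_le_iff₀ ha] at hs2; linarith
  have hs0 : (0:ℝ) < s := by linarith
  nlinarith [le_abs_self b, neg_abs_le b, neg_abs_le c, le_abs_self c,
    mul_nonneg (sub_nonneg.2 key) hs0.le, abs_nonneg b, abs_nonneg c]

lemma aux_lin (b c : ℝ) (hb : b ≠ 0) : ∃ t : ℝ, 0 < b*t + c := by
  refine ⟨(1+|c|)/b, ?_⟩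
  rw [mul_div_cancel₀ _ hb]
  have := neg_abs_le c; linarith

lemma aux_factor (N : Matrix (Fin 2) (Fin 2) ℝ) (h0 : N ≠ 0) (hd : N.det = 0) :
    ∃ a0 a1 b0 b1 : ℝ, (a0 ≠ 0 ∨ a1 ≠ 0) ∧ (b0 ≠ 0 ∨ b1 ≠ 0) ∧
      N = !![a0*b0, a0*b1; a1*b0, a1*b1] := by
  rw [Matrix.det_fin_two] at hd
  by_cases h00 : N 0 0 ≠ 0
  · refine ⟨N 0 0, N 1 0, 1, N 0 1 / N 0 0, Or.inl h00, Or.inl one_ne_zero, ?_⟩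
    ext i j; fin_cases i <;> fin_cases j <;> simp <;> field_simp
    · nlinarith [hd]
  push_neg at h00
  by_cases h10 : N 1 0 ≠ 0
  · have h01 : N 0 1 = 0 := by
      rw [h00] at hd; simp at hd; rcases hd with h | h
      · exact h
      · exact absurd h h10
    refine ⟨0, N 1 0, 1, N 1 1 / N 1 0, Or.inr h10, Or.inl one_ne_zero, ?_⟩
    ext i j; fin_cases i <;> fin_cases j <;> simp [h00, h01] <;> field_simp
  push_neg at h10
  refine ⟨N 0 1, N 1 1, 0, 1, ?_, Or.inr one_ne_zero, ?_⟩
  · by_contra hc; push_neg at hc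
    apply h0; ext i j; fin_cases i <;> fin_cases j <;> simp [h00, h10, hc.1, hc.2]
  · ext i j; fin_cases i <;> fin_cases j <;> simp [h00, h10]

lemma aux_normalize (N : Matrix (Fin 2) (Fin 2) ℝ) (h0 : N ≠ 0) (hd : N.det = 0) :
    ∃ P Q : Matrix (Fin 2) (Fin 2) ℝ, P.det = 1 ∧ Q.det = 1 ∧
      P * N * Q = !![0,1;0,0] := by
  obtain ⟨a0, a1, b0, b1, ha, hb, hN⟩ := aux_factor N h0 hd
  have hk : (0:ℝ) < a0^2 + a1^2 := by rcases ha with h | h <;> positivity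
  have hm : (0:ℝ) < b0^2 + b1^2 := by rcases hb with h | h <;> positivity
  refine ⟨!![a0/(a0^2+a1^2), a1/(a0^2+a1^2); -a1, a0],
          !![b1, b0/(b0^2+b1^2); -b0, b1/(b0^2+b1^2)], ?_, ?_, ?_⟩
  · rw [Matrix.det_fin_two_of]; field_simp; ring
  · rw [Matrix.det_fin_two_of]; field_simp; ring
  · subst hN
    ext i j; fin_cases i <;> fin_cases j <;>
      simp [Matrix.mul_apply, Fin.sum_univ_succ] <;> (try field_simp) <;> ring

lemma act_key (h₁ h₂ : SL2) (x : Fin 4 → ℝ) :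
    act h₁ h₂ x 1 + act h₁ h₂ x 3
      = ((h₁ : Matrix (Fin 2) (Fin 2) ℝ) * psiM x
          * ((h₂⁻¹ : SL2) : Matrix (Fin 2) (Fin 2) ℝ)) 0 1 := by
  simp [act, psiInv]; ring

lemma psiM_det (x : Fin 4 → ℝ) : (psiM x).det = -(qf x x) := by
  rw [psiM, Matrix.det_fin_two_of, qf]; ring

lemma psiM_inj {x y : Fin 4 → ℝ} (h : psiM x = psiM y) : x = y := by
  have h00 := congrFun (congrFun h 0) 0
  have h01 := congrFun (congrFun h 0) 1
  have h10 := congrFun (congrFun h 1) 0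
  have h11 := congrFun (congrFun h 1) 1
  simp [psiM] at h00 h01 h10 h11
  funext i; fin_cases i <;> simp <;> linarith

lemma psiM_eq_zero {x : Fin 4 → ℝ} (h : psiM x = 0) : x = 0 := by
  apply psiM_inj (y := 0)
  rw [h]; ext i j; fin_cases i <;> fin_cases j <;> simp [psiM]

lemma psiM_smul (c : ℝ) (x : Fin 4 → ℝ) : psiM (c • x) = c • psiM x := by
  ext i j; fin_cases i <;> fin_cases j <;> simp [psiM] <;> ring

lemma entry01 (t r : ℝ) (M : Matrix (Fin 2) (Fin 2) ℝ) :
    (!![1,t;0,1] * M * !![1,r;0,1]) 0 1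
      = M 0 1 + t * M 1 1 + r * M 0 0 + t * r * M 1 0 := by
  simp [Matrix.mul_apply, Fin.sum_univ_succ, Matrix.vecMul, Matrix.vecHead,
    Matrix.vecTail, dotProduct]
  ring

/-- Two boundary rays represented by null vectors `ν, ν'` with `ν'` not a positive multiple
of `-ν` can be simultaneously moved by an element of `SL(2,ℝ) × SL(2,ℝ)` into the open set
`{x : x₂ + x₄ > 0}`. -/
theorem stmt9 (ν ν' : Fin 4 → ℝ) (hν0 : ν ≠ 0) (hν'0 : ν' ≠ 0)
    (hν : qf ν ν = 0) (hν' : qf ν' ν' = 0)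
    (hne : ∀ lam : ℝ, 0 < lam → ν' ≠ lam • (-ν)) :
    ∃ h₁ h₂ : SL2,
      0 < act h₁ h₂ ν 1 + act h₁ h₂ ν 3 ∧
      0 < act h₁ h₂ ν' 1 + act h₁ h₂ ν' 3 := by
  set N := psiM ν with hNdef
  set N' := psiM ν' with hN'def
  have hdN : N.det = 0 := by rw [hNdef, psiM_det, hν, neg_zero]
  have hdN' : N'.det = 0 := by rw [hN'def, psiM_det, hν', neg_zero]
  have hN0 : N ≠ 0 := fun h => hν0 (psiM_eq_zero h)
  obtain ⟨P, Q, hP, hQ, hPQ⟩ := aux_normalize N hN0 hdN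
  have hPu : IsUnit P.det := by rw [hP]; exact isUnit_one
  have hQu : IsUnit Q.det := by rw [hQ]; exact isUnit_one
  have cancel : ∀ A B : Matrix (Fin 2) (Fin 2) ℝ, P * A * Q = P * B * Q → A = B := by
    intro A B h
    have h2 := congrArg (fun X => P⁻¹ * X * Q⁻¹) h
    simpa [Matrix.mul_assoc, Matrix.nonsing_inv_mul_cancel_left _ _ hPu,
      Matrix.mul_nonsing_inv _ hQu] using h2
  set M := P * N' * Q with hM
  have hMdet : M 0 0 * M 1 1 - M 0 1 * M 1 0 = 0 := by
    have : M.det = 0 := by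
      rw [hM, Matrix.det_mul, Matrix.det_mul, hQ, hdN']; ring
    rwa [Matrix.det_fin_two] at this
  have hM0 : M ≠ 0 := by
    intro h
    apply hν'0
    apply psiM_eq_zero
    show N' = 0
    apply cancel
    rw [← hM, h, Matrix.mul_zero, Matrix.zero_mul]
  have hexc : ¬(M 0 0 = 0 ∧ M 1 0 = 0 ∧ M 1 1 = 0 ∧ M 0 1 < 0) := by
    rintro ⟨e00, e10, e11, e01⟩
    have hN'c : N' = (M 0 1) • N := by
      apply cancel
      rw [← hM]
      have h1 : P * (M 0 1 • N) * Q = (M 0 1) • (P * N * Q) := by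
        rw [Matrix.mul_smul, Matrix.smul_mul]
      rw [h1, hPQ]
      ext i j
      fin_cases i <;> fin_cases j <;>
        simp [Matrix.smul_apply] <;> first | exact e00 | exact e10 | exact e11
    have hνc : ν' = (M 0 1) • ν := by
      apply psiM_inj
      rw [psiM_smul]; exact hN'c
    refine hne (-(M 0 1)) (by linarith) ?_
    rw [hνc, smul_neg, neg_smul, neg_neg]
  -- find t, r making the (0,1)-entry positive
  obtain ⟨t, r, hf⟩ :
      ∃ t r : ℝ, 0 < M 0 1 + t * M 1 1 + r * M 0 0 + t * r * M 1 0 := by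
    rcases lt_trichotomy (M 1 0) 0 with hlt | heq | hgt
    · obtain ⟨s, hs⟩ := aux_quad (-(M 1 0)) (M 1 1 - M 0 0) (M 0 1) (by linarith)
      exact ⟨s, -s, by nlinarith [hs]⟩
    · by_cases h11 : M 1 1 ≠ 0
      · obtain ⟨t, ht⟩ := aux_lin (M 1 1) (M 0 1) h11
        exact ⟨t, 0, by rw [heq]; rw [mul_comm] at ht; linarith⟩
      push_neg at h11
      by_cases h00 : M 0 0 ≠ 0
      · obtain ⟨r, hr⟩ := aux_lin (M 0 0) (M 0 1) h00
        exact ⟨0, r, by rw [heq, h11]; rw [mul_comm] at hr; linarith⟩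
      push_neg at h00
      have h01 : M 0 1 ≠ 0 := by
        intro h01
        apply hM0
        ext i j; fin_cases i <;> fin_cases j <;> simp [h00, h01, heq, h11] <;>
          first | exact h00 | exact h01 | exact heq | exact h11
      have hpos : 0 < M 0 1 := by
        rcases h01.lt_or_gt with h | h
        · exact absurd ⟨h00, heq, h11, h⟩ hexc
        · exact h
      exact ⟨0, 0, by rw [heq, h11, h00]; simpa using hpos⟩
    · obtain ⟨s, hs⟩ := aux_quad (M 1 0) (M 0 0 + M 1 1) (M 0 1) hgt
      exact ⟨s, s, by nlinarith [hs]⟩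
  -- assemble the group elements
  have hUt : (!![1,t;0,1] : Matrix (Fin 2) (Fin 2) ℝ).det = 1 := by
    rw [Matrix.det_fin_two_of]; ring
  have hVr : (!![1,r;0,1] : Matrix (Fin 2) (Fin 2) ℝ).det = 1 := by
    rw [Matrix.det_fin_two_of]; ring
  have hL : (!![1,t;0,1] * P).det = 1 := by rw [Matrix.det_mul, hUt, hP]; ring
  have hR : (Q * !![1,r;0,1]).det = 1 := by rw [Matrix.det_mul, hQ, hVr]; ring
  refine ⟨(⟨!![1,t;0,1] * P, hL⟩ : SL2), ((⟨Q * !![1,r;0,1], hR⟩ : SL2))⁻¹, ?_, ?_⟩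
  · erw [act_key]
    erw [inv_inv]
    show (0:ℝ) < ((!![1,t;0,1] * P) * psiM ν * (Q * !![1,r;0,1])) 0 1
    have : (!![1,t;0,1] * P) * psiM ν * (Q * !![1,r;0,1])
        = !![1,t;0,1] * (P * N * Q) * !![1,r;0,1] := by
      rw [hNdef]; noncomm_ring
    rw [this, hPQ, entry01]
    norm_num
  · erw [act_key]
    erw [inv_inv]
    show (0:ℝ) < ((!![1,t;0,1] * P) * psiM ν' * (Q * !![1,r;0,1])) 0 1
    have : (!![1,t;0,1] * P) * psiM ν' * (Q * !![1,r;0,1])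
        = !![1,t;0,1] * M * !![1,r;0,1] := by
      rw [hM, hN'def]; noncomm_ring
    rw [this, entry01]
    linarith
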